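/- For a normal-form monomial m = a_{N-1}^{d_{N-1}} ⋯ a_2^{d_2} a_1^{k_1} ⋯ a_{N-1}^{k_{N-1}} in the partic algebra, applying m to the minimal input monomial x_1^{k_1} x_2^{k_2} ⋯ x_{N-1}^{k_{N-1}} gives the monomial x_2^{k_1 − d_2} x_3^{k_2 + d_2 − d_3} ⋯ x_{N-1}^{k_{N-2} + d_{N-2} − d_{N-1}} x_0^{k_{N-1} + d_{N-1}}. -/

import Mathlib

/-- The particle-moving operator `ρ(a_i)` on `K[x_1, …, x_{N-1}, x_0]` (realized as
`MvPolynomial (Fin N) K`, where the variable of index `0` is `x_0`): it sends a monomial with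
positive exponent at `x_i` to the monomial with the exponent of `x_i` decreased by `1` and that
of `x_{i+1}` (that is, `x_0` when `i = N-1`) increased by `1`, and kills other monomials. -/
noncomputable def rho (K : Type*) [Field K] (N : ℕ) (i : ℕ) :
    Module.End K (MvPolynomial (Fin N) K) :=
  (MvPolynomial.basisMonomials (Fin N) K).constr K fun m =>
    if h : 1 ≤ i ∧ i < N then
      if 0 < m ⟨i, h.2⟩ then
        (MvPolynomial.basisMonomials (Fin N) K)
          ((m.update ⟨i, h.2⟩ (m ⟨i, h.2⟩ - 1)).update
            ⟨(i + 1) % N, Nat.mod_lt _ (by omega)⟩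
            ((m.update ⟨i, h.2⟩ (m ⟨i, h.2⟩ - 1)) ⟨(i + 1) % N, Nat.mod_lt _ (by omega)⟩ + 1))
      else 0
    else 0

/-- The operator `ρ(a_{N-1})^{d_{N-1}} ⋯ ρ(a_2)^{d_2} ρ(a_1)^{e_1} ⋯ ρ(a_{N-1})^{e_{N-1}}`
by which a normal-form monomial of the partic algebra acts on `K[x_1, …, x_{N-1}, x_0]`. -/
noncomputable def rhoNf (K : Type*) [Field K] (N : ℕ) (d e : ℕ → ℕ) :
    Module.End K (MvPolynomial (Fin N) K) :=
  ((List.range (N - 2)).map fun t => rho K N (N - 1 - t) ^ d (N - 1 - t)).prod *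
    ((List.range (N - 1)).map fun t => rho K N (t + 1) ^ e (t + 1)).prod

section helpers

variable (K : Type*) [Field K] (N : ℕ)

noncomputable def B (f : Fin N → ℕ) : MvPolynomial (Fin N) K :=
  MvPolynomial.basisMonomials (Fin N) K (Finsupp.equivFunOnFinite.symm f)

lemma B_congr {f g : Fin N → ℕ} (h : ∀ x, f x = g x) : B K N f = B K N g := by
  rw [show f = g from funext h]

lemma finsupp_update (f : Fin N → ℕ) (a : Fin N) (b : ℕ) :
    (Finsupp.equivFunOnFinite.symm f).update a b =
      Finsupp.equivFunOnFinite.symm (Function.update f a b) := by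
  ext x
  simp [Finsupp.update_apply, Function.update_apply]

lemma rho_apply (i : ℕ) (h1 : 1 ≤ i) (h2 : i < N) (f : Fin N → ℕ)
    (hf : 0 < f ⟨i, h2⟩) :
    rho K N i (B K N f) =
      B K N (fun x => if x = (⟨i, h2⟩ : Fin N) then f x - 1
        else if x = (⟨(i + 1) % N, Nat.mod_lt _ (by omega)⟩ : Fin N) then f x + 1 else f x) := by
  have hij : (i + 1) % N ≠ i := by
    rcases Nat.lt_or_ge (i+1) N with h | h
    · rw [Nat.mod_eq_of_lt h]; omega
    · have : i + 1 = N := by omega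
      rw [this]; simp; omega
  unfold rho B
  rw [Module.Basis.constr_basis]
  rw [dif_pos ⟨h1, h2⟩, if_pos (by simpa using hf)]
  congr 1
  rw [finsupp_update, finsupp_update]
  congr 1
  funext x
  simp only [Finsupp.coe_equivFunOnFinite_symm, Function.update_apply]
  by_cases hx1 : x = (⟨i, h2⟩ : Fin N)
  · subst hx1
    simp [Fin.ext_iff, hij, Ne.symm hij]
  · by_cases hx2 : x = (⟨(i + 1) % N, Nat.mod_lt _ (by omega)⟩ : Fin N)
    · subst hx2
      simp [Fin.ext_iff, hij]
    · have hv1 : (x : ℕ) ≠ i := fun h => hx1 (Fin.ext h)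
      have hv2 : (x : ℕ) ≠ (i + 1) % N := fun h => hx2 (Fin.ext h)
      simp [Fin.ext_iff, hv1, hv2]

lemma rho_pow_apply (i : ℕ) (h1 : 1 ≤ i) (h2 : i < N) (n : ℕ) (f : Fin N → ℕ)
    (hf : n ≤ f ⟨i, h2⟩) :
    (rho K N i ^ n) (B K N f) =
      B K N (fun x => if x = (⟨i, h2⟩ : Fin N) then f x - n
        else if x = (⟨(i + 1) % N, Nat.mod_lt _ (by omega)⟩ : Fin N) then f x + n else f x) := by
  have hij : (⟨(i + 1) % N, Nat.mod_lt _ (by omega)⟩ : Fin N) ≠ ⟨i, h2⟩ := by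
    simp only [ne_eq, Fin.mk.injEq]
    rcases Nat.lt_or_ge (i+1) N with h | h
    · rw [Nat.mod_eq_of_lt h]; omega
    · have : i + 1 = N := by omega
      rw [this]; simp; omega
  induction n generalizing f with
  | zero =>
    simp only [pow_zero, Module.End.one_apply]
    exact B_congr K N fun x => by split_ifs <;> omega
  | succ n ih =>
    rw [pow_succ, Module.End.mul_apply, rho_apply K N i h1 h2 f (by omega)]
    rw [ih _ (by rw [if_pos rfl]; omega) hij]
    apply B_congr
    intro x
    by_cases hx1 : x = (⟨i, h2⟩ : Fin N)
    · subst hx1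
      rw [if_pos rfl, if_pos rfl, if_pos rfl]
      omega
    · by_cases hx2 : x = (⟨(i + 1) % N, Nat.mod_lt _ (by omega)⟩ : Fin N)
      · subst hx2
        have h' : (i + 1) % N ≠ i := fun h => hij (Fin.ext h)
        simp [Fin.ext_iff, h']
        try omega
      · rw [if_neg hx1, if_neg hx2, if_neg hx1, if_neg hx2, if_neg hx1, if_neg hx2]

end helpers

section sweeps

variable (K : Type*) [Field K] (N : ℕ)

def gconf (N : ℕ) (e : ℕ → ℕ) (s : ℕ) : Fin N → ℕ := fun x =>
  if (x : ℕ) = 0 then (if s = N - 1 then 0 else e (N - 1))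
  else if (x : ℕ) ≤ s then e (x : ℕ)
  else if (x : ℕ) = s + 1 then 0
  else e ((x : ℕ) - 1)

def cconf (N : ℕ) (d e : ℕ → ℕ) (s : ℕ) : Fin N → ℕ := fun x =>
  if (x : ℕ) = 0 then e (N - 1) + (if s = 0 then d (N - 1) else 0)
  else if (x : ℕ) = 1 then 0
  else if (x : ℕ) ≤ N - 1 - s then e ((x : ℕ) - 1) + d ((x : ℕ) - 1) - d (x : ℕ)
  else if (x : ℕ) = N - s then e ((x : ℕ) - 1) + d ((x : ℕ) - 1)
  else e ((x : ℕ) - 1)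

set_option maxHeartbeats 1000000 in
lemma gstep (e : ℕ → ℕ) (s : ℕ) (h1 : 1 ≤ s) (h2 : s < N) :
    (rho K N s ^ e s) (B K N (gconf N e s)) = B K N (gconf N e (s - 1)) := by
  rw [rho_pow_apply K N s h1 h2 (e s) _ (by simp only [gconf]; split_ifs <;> omega)]
  apply B_congr
  intro x
  obtain ⟨v, hv⟩ := x
  rcases Nat.lt_or_ge (s + 1) N with hs | hs
  · have hmod : (s + 1) % N = s + 1 := Nat.mod_eq_of_lt hs
    simp only [gconf, Fin.ext_iff, hmod]
    split_ifs <;> (try subst_vars) <;>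
      (try simp only [Nat.add_sub_cancel]) <;> omega
  · have hsN : s = N - 1 := by omega
    subst hsN
    have hmod : (N - 1 + 1) % N = 0 := by
      have h : N - 1 + 1 = N := by omega
      rw [h, Nat.mod_self]
    simp only [gconf, Fin.ext_iff, hmod]
    split_ifs <;> (try subst_vars) <;>
      (try simp only [Nat.add_sub_cancel]) <;> omega

set_option maxHeartbeats 1000000 in
lemma cstep (d e : ℕ → ℕ) (i : ℕ) (h2i : 2 ≤ i) (hiN : i ≤ N - 1) (hN3 : 3 ≤ N)
    (hle : d i ≤ e (i - 1) + d (i - 1)) :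
    (rho K N i ^ d i) (B K N (cconf N d e (N - i))) = B K N (cconf N d e (N - i - 1)) := by
  rw [rho_pow_apply K N i (by omega) (by omega) (d i) _
    (by simp only [cconf]; split_ifs <;> omega)]
  apply B_congr
  intro x
  obtain ⟨v, hv⟩ := x
  rcases Nat.lt_or_ge (i + 1) N with hs | hs
  · have hmod : (i + 1) % N = i + 1 := Nat.mod_eq_of_lt hs
    simp only [cconf, Fin.ext_iff, hmod]
    split_ifs <;> (try subst_vars) <;>
      (try simp only [Nat.add_sub_cancel]) <;> omega
  · have hsN : i = N - 1 := by omega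
    subst hsN
    have hmod : (N - 1 + 1) % N = 0 := by
      have h : N - 1 + 1 = N := by omega
      rw [h, Nat.mod_self]
    simp only [cconf, Fin.ext_iff, hmod]
    split_ifs <;> (try subst_vars) <;>
      (try simp only [Nat.add_sub_cancel]) <;> omega

lemma prodE (e : ℕ → ℕ) (t : ℕ) (ht : t ≤ N - 1) (hN : 1 ≤ N) :
    (((List.range' (N - 1 - t) t).map fun u => rho K N (u + 1) ^ e (u + 1)).prod)
      (B K N (gconf N e (N - 1))) = B K N (gconf N e (N - 1 - t)) := by
  induction t with
  | zero => simp
  | succ t ih =>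
    have h1 : N - 1 - (t + 1) + 1 = N - 1 - t := by omega
    rw [List.range'_succ, List.map_cons, List.prod_cons, Module.End.mul_apply, h1,
      ih (by omega)]
    have hg := gstep K N e (N - 1 - t) (by omega) (by omega)
    rw [hg]
    have h2 : N - 1 - t - 1 = N - 1 - (t + 1) := by omega
    rw [h2]

lemma prodD (d e : ℕ → ℕ) (hN : 3 ≤ N) (hd1 : d 1 = 0) (h21 : d 2 ≤ e 1)
    (hnf : ∀ i, 3 ≤ i → i ≤ N - 1 → d i ≤ d (i - 1) + e (i - 1))
    (t : ℕ) (ht : t ≤ N - 2) :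
    (((List.range' (N - 2 - t) t).map fun u => rho K N (N - 1 - u) ^ d (N - 1 - u)).prod)
      (B K N (cconf N d e (N - 2))) = B K N (cconf N d e (N - 2 - t)) := by
  induction t with
  | zero => simp
  | succ t ih =>
    have h1 : N - 2 - (t + 1) + 1 = N - 2 - t := by omega
    have hidx : N - 1 - (N - 2 - (t + 1)) = t + 2 := by omega
    rw [List.range'_succ, List.map_cons, List.prod_cons, Module.End.mul_apply, h1, hidx,
      ih (by omega)]
    have harg : N - 2 - t = N - (t + 2) := by omega
    rw [harg]
    have hle : d (t + 2) ≤ e (t + 2 - 1) + d (t + 2 - 1) := by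
      rcases Nat.eq_zero_or_pos t with h | h
      · subst h; norm_num [hd1, h21]
      · have := hnf (t + 2) (by omega) (by omega)
        omega
    have hc := cstep K N d e (t + 2) (by omega) (by omega) hN hle
    rw [hc]
    have h2 : N - (t + 2) - 1 = N - 2 - (t + 1) := by omega
    rw [h2]

end sweeps

set_option maxHeartbeats 1000000 in
/-- Applying a normal-form monomial to its minimal input configuration
`(k_1, …, k_{N-1}, 0)` yields the output configuration
`(0, k_1 − d_2, k_2 + d_2 − d_3, …, k_{N-2} + d_{N-2} − d_{N-1}, k_{N-1} + d_{N-1})`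
(the last entry at position `0`); here we use the convention `d_1 = 0`. -/
theorem stmt13 (K : Type*) [Field K] (N : ℕ) (hN : 3 ≤ N) (d e : ℕ → ℕ) (hd1 : d 1 = 0)
    (h21 : d 2 ≤ e 1) (hnf : ∀ i, 3 ≤ i → i ≤ N - 1 → d i ≤ d (i - 1) + e (i - 1)) :
    rhoNf K N d e (MvPolynomial.basisMonomials (Fin N) K
      (Finsupp.equivFunOnFinite.symm fun i : Fin N => if (i : ℕ) = 0 then 0 else e (i : ℕ))) =
    MvPolynomial.basisMonomials (Fin N) K
      (Finsupp.equivFunOnFinite.symm fun i : Fin N =>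
        if (i : ℕ) = 0 then e (N - 1) + d (N - 1)
        else if (i : ℕ) = 1 then 0
        else e ((i : ℕ) - 1) + d ((i : ℕ) - 1) - d (i : ℕ)) := by
  have hN1 : 1 ≤ N := by omega
  unfold rhoNf
  rw [Module.End.mul_apply]
  have hin : (MvPolynomial.basisMonomials (Fin N) K
      (Finsupp.equivFunOnFinite.symm fun i : Fin N => if (i : ℕ) = 0 then 0 else e (i : ℕ))) =
      B K N (gconf N e (N - 1)) := by
    exact B_congr K N fun x => by
      simp only [gconf]; split_ifs <;> omega
  rw [hin]
  rw [List.range_eq_range', List.range_eq_range']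
  have hE := prodE K N e (N - 1) le_rfl hN1
  rw [Nat.sub_self] at hE
  rw [hE]
  have hx2 : N - (N - 2) = 2 := by omega
  have hgc : B K N (gconf N e 0) = B K N (cconf N d e (N - 2)) := by
    apply B_congr
    intro x
    obtain ⟨v, hv⟩ := x
    simp only [gconf, cconf, hx2]
    split_ifs <;> (try subst_vars) <;>
      (try simp only [Nat.add_sub_cancel, show (2:ℕ) - 1 = 1 from rfl]) <;> omega
  rw [hgc]
  have hD := prodD K N d e hN hd1 h21 hnf (N - 2) le_rfl
  rw [Nat.sub_self] at hD
  rw [hD]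
  exact B_congr K N fun x => by
    obtain ⟨v, hv⟩ := x
    simp only [cconf]
    split_ifs <;> omega
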